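/- For any scoring function s and any strictly increasing function ψ : [0,∞) → [0,∞) such that ψ∘s is a scoring function, the MV curves coincide: MV_{ψ∘s}(α) = MV_s(α) for every α ∈ (0,1). -/

import Mathlib

open MeasureTheory Set Filter
open scoped ENNReal Topology symmDiff

noncomputable section

/-- The probability distribution on `ℝ^d` with Lebesgue density `f`. -/
def densMeasure {d : ℕ} (f : (Fin d → ℝ) → ℝ) : Measure (Fin d → ℝ) :=
  volume.withDensity fun x => ENNReal.ofReal (f x)

/-- A scoring function: measurable, nonnegative and Lebesgue-integrable. -/
def IsScoring {d : ℕ} (s : (Fin d → ℝ) → ℝ) : Prop :=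
  Measurable s ∧ (∀ x, 0 ≤ s x) ∧ Integrable s volume

/-- The mass `α_s(t) = P(s(X) ≥ t)` of the level set `{s ≥ t}`. -/
def alphaS {d : ℕ} (μ : Measure (Fin d → ℝ)) (s : (Fin d → ℝ) → ℝ) (t : ℝ) : ℝ :=
  (μ {x | t ≤ s x}).toReal

/-- The Lebesgue volume `λ_s(t)` of the level set `{s ≥ t}`. -/
def lamS {d : ℕ} (s : (Fin d → ℝ) → ℝ) (t : ℝ) : ℝ :=
  (volume {x | t ≤ s x}).toReal

/-- The generalized inverse `α_s⁻¹(α) = inf {t : α_s(t) ≤ α}`. -/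
def alphaInv {d : ℕ} (μ : Measure (Fin d → ℝ)) (s : (Fin d → ℝ) → ℝ) (α : ℝ) : ℝ :=
  sInf {t | alphaS μ s t ≤ α}

/-- The Mass Volume curve `MV_s(α) = λ_s(α_s⁻¹(α))`. -/
def MV {d : ℕ} (μ : Measure (Fin d → ℝ)) (s : (Fin d → ℝ) → ℝ) (α : ℝ) : ℝ :=
  lamS s (alphaInv μ s α)

/-- The cumulative distribution function `F_s(t) = P(s(X) ≤ t)`. -/
def cdfS {d : ℕ} (μ : Measure (Fin d → ℝ)) (s : (Fin d → ℝ) → ℝ) (t : ℝ) : ℝ :=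
  (μ {x | s x ≤ t}).toReal

/-- The quantile function `F_s†(u) = inf {t : F_s(t) ≥ u}`. -/
def quantS {d : ℕ} (μ : Measure (Fin d → ℝ)) (s : (Fin d → ℝ) → ℝ) (u : ℝ) : ℝ :=
  sInf {t | u ≤ cdfS μ s t}

/-- Auxiliary: for a finite measure and measurable score, some tail has mass ≤ α. -/
lemma exists_alphaS_le {d : ℕ} (μ : Measure (Fin d → ℝ)) [IsFiniteMeasure μ]
    (s : (Fin d → ℝ) → ℝ) (hs : Measurable s) {α : ℝ} (hα : 0 < α) :
    ∃ t : ℝ, alphaS μ s t ≤ α := by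
  have hmeas : ∀ n : ℕ, NullMeasurableSet {x | (n : ℝ) ≤ s x} μ := fun n =>
    (measurableSet_le measurable_const hs).nullMeasurableSet
  have hanti : Antitone fun n : ℕ => {x | (n : ℝ) ≤ s x} := by
    intro n m hnm x hx
    exact le_trans (show (n:ℝ) ≤ (m:ℝ) from Nat.cast_le.mpr hnm) hx
  have hfin : ∃ n : ℕ, μ {x | (n : ℝ) ≤ s x} ≠ ⊤ := ⟨0, measure_ne_top μ _⟩
  have hempty : (⋂ n : ℕ, {x | (n : ℝ) ≤ s x}) = (∅ : Set (Fin d → ℝ)) := by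
    ext x
    simp only [Set.mem_iInter, Set.mem_setOf_eq, Set.mem_empty_iff_false, iff_false, not_forall,
      not_le]
    obtain ⟨n, hn⟩ := exists_nat_gt (s x)
    exact ⟨n, hn⟩
  have htend := MeasureTheory.tendsto_measure_iInter_atTop (μ := μ) hmeas hanti hfin
  rw [hempty, measure_empty] at htend
  have : ∀ᶠ n : ℕ in atTop, μ {x | (n : ℝ) ≤ s x} < ENNReal.ofReal α := by
    exact htend.eventually_lt_const (by simp [hα])
  obtain ⟨n, hn⟩ := this.exists
  exact ⟨(n : ℝ), ENNReal.toReal_le_of_le_ofReal hα.le hn.le⟩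

/-- invariance of the MV curve under strictly increasing transforms. -/
theorem MV_curve_invariant_strictMono {d : ℕ} (f : (Fin d → ℝ) → ℝ)
    (hf_meas : Measurable f) (hf_nonneg : ∀ x, 0 ≤ f x)
    (hf_prob : IsProbabilityMeasure (densMeasure f))
    (s : (Fin d → ℝ) → ℝ) (hs : IsScoring s)
    (ψ : ℝ → ℝ) (hψ_mono : StrictMonoOn ψ (Ici (0:ℝ)))
    (hψ_nonneg : ∀ x ∈ Ici (0:ℝ), 0 ≤ ψ x)
    (hψs : IsScoring (fun x => ψ (s x))) :
    ∀ α ∈ Ioo (0:ℝ) 1,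
      MV (densMeasure f) (fun x => ψ (s x)) α = MV (densMeasure f) s α := by
  intro α hα
  obtain ⟨hα0, hα1⟩ := hα
  haveI := hf_prob
  set μ := densMeasure f with hμ
  obtain ⟨hs_meas, hs_nonneg, -⟩ := hs
  obtain ⟨hψs_meas, -, -⟩ := hψs
  have hψmono : MonotoneOn ψ (Ici 0) := hψ_mono.monotoneOn
  -- key level-set identity for thresholds of the form ψ u
  have L1 : ∀ u : ℝ, 0 ≤ u → {x | ψ u ≤ ψ (s x)} = {x | u ≤ s x} := by
    intro u hu
    ext x
    simp only [Set.mem_setOf_eq]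
    constructor
    · intro h
      by_contra hlt
      push_neg at hlt
      exact absurd h (not_le.mpr (hψ_mono (hs_nonneg x) hu hlt))
    · intro h
      exact hψmono hu (hs_nonneg x) h
  have hA'eq : ∀ u : ℝ, 0 ≤ u →
      alphaS μ (fun x => ψ (s x)) (ψ u) = alphaS μ s u := by
    intro u hu
    simp only [alphaS]
    rw [L1 u hu]
  -- monotonicity of alphaS
  have Amono : ∀ (g : (Fin d → ℝ) → ℝ) (t₁ t₂ : ℝ), t₁ ≤ t₂ →
      alphaS μ g t₂ ≤ alphaS μ g t₁ := by
    intro g t₁ t₂ h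
    exact ENNReal.toReal_mono (measure_ne_top μ _)
      (measure_mono fun x hx => le_trans h hx)
  -- alphaS is 1 below the essential minimum
  have hA1 : ∀ (g : (Fin d → ℝ) → ℝ), (∀ x, 0 ≤ g x) → ∀ c t : ℝ,
      (∀ x, c ≤ g x) → t ≤ c → alphaS μ g t = 1 := by
    intro g hg c t hc ht
    have : {x | t ≤ g x} = Set.univ :=
      Set.eq_univ_of_forall fun x => le_trans ht (hc x)
    simp [alphaS, this]
  -- the sets whose infima define the generalized inverses
  set S : Set ℝ := {t | alphaS μ s t ≤ α} with hS
  set S' : Set ℝ := {t | alphaS μ (fun x => ψ (s x)) t ≤ α} with hS'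
  have hSne : S.Nonempty := exists_alphaS_le μ s hs_meas hα0
  have hS'ne : S'.Nonempty := exists_alphaS_le μ (fun x => ψ (s x)) hψs_meas hα0
  have hSbdd : BddBelow S := by
    refine ⟨0, fun t ht => ?_⟩
    by_contra hlt
    push_neg at hlt
    have := hA1 s hs_nonneg 0 t hs_nonneg hlt.le
    rw [hS] at ht
    simp only [Set.mem_setOf_eq] at ht
    rw [this] at ht
    linarith
  have hS'bdd : BddBelow S' := by
    refine ⟨ψ 0, fun t ht => ?_⟩
    by_contra hlt
    push_neg at hlt
    have := hA1 (fun x => ψ (s x)) (fun x => hψ_nonneg _ (hs_nonneg x)) (ψ 0) t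
      (fun x => hψmono (mem_Ici.mpr le_rfl) (hs_nonneg x) (hs_nonneg x)) hlt.le
    rw [hS'] at ht
    simp only [Set.mem_setOf_eq] at ht
    rw [this] at ht
    linarith
  set T : ℝ := alphaInv μ s α with hTdef
  set T' : ℝ := alphaInv μ (fun x => ψ (s x)) α with hT'def
  have hTS : T = sInf S := rfl
  have hT'S : T' = sInf S' := rfl
  have hT0 : 0 ≤ T := le_csInf hSne fun t ht => by
    by_contra hlt
    push_neg at hlt
    have := hA1 s hs_nonneg 0 t hs_nonneg hlt.le
    simp only [hS, Set.mem_setOf_eq, this] at ht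
    linarith
  -- membership above the infimum
  have hmemS : ∀ v : ℝ, T < v → alphaS μ s v ≤ α := by
    intro v hv
    obtain ⟨u, hu, huv⟩ := exists_lt_of_csInf_lt hSne (hTS ▸ hv)
    exact le_trans (Amono s u v huv.le) hu
  -- THE KEY SET EQUALITY
  have key : {x | T' ≤ ψ (s x)} = {x | T ≤ s x} := by
    ext x
    simp only [Set.mem_setOf_eq]
    constructor
    · intro h
      by_contra hlt
      push_neg at hlt
      obtain ⟨v, hv1, hv2⟩ := exists_between hlt
      have hv0 : 0 ≤ v := le_trans (hs_nonneg x) hv1.le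
      have hvnot : ¬ alphaS μ s v ≤ α := fun hmem =>
        absurd (hTS ▸ csInf_le hSbdd hmem) (not_le.mpr hv2)
      apply hvnot
      have hψlt : T' < ψ v := lt_of_le_of_lt h (hψ_mono (hs_nonneg x) hv0 hv1)
      obtain ⟨u, hu, huv⟩ := exists_lt_of_csInf_lt hS'ne (hT'S ▸ hψlt)
      have : alphaS μ (fun x => ψ (s x)) (ψ v) ≤ α :=
        le_trans (Amono _ u (ψ v) huv.le) hu
      rwa [hA'eq v hv0] at this
    · intro h
      by_cases hc : alphaS μ s T ≤ α
      · have h1 : alphaS μ (fun x => ψ (s x)) (ψ T) ≤ α := by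
          rw [hA'eq T hT0]; exact hc
        exact le_trans (hT'S ▸ csInf_le hS'bdd h1) (hψmono hT0 (hs_nonneg x) h)
      · -- T not attained: show T' ≤ ψ T via μ {s > T} ≤ α
        have hμgt : μ {x | T < s x} ≤ ENNReal.ofReal α := by
          have hunion : {x | T < s x} = ⋃ n : ℕ, {x | T + 1 / (n + 1) ≤ s x} := by
            ext y
            simp only [Set.mem_setOf_eq, Set.mem_iUnion]
            constructor
            · intro hy
              obtain ⟨n, hn⟩ := exists_nat_one_div_lt (sub_pos.mpr hy)
              exact ⟨n, by linarith⟩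
            · rintro ⟨n, hn⟩
              have : (0 : ℝ) < 1 / (n + 1) := by positivity
              linarith
          have hmonoSets : Monotone fun n : ℕ => {x | T + 1 / ((n : ℝ) + 1) ≤ s x} := by
            intro n m hnm y hy
            simp only [Set.mem_setOf_eq] at hy ⊢
            have h1 : (1 : ℝ) / ((m : ℝ) + 1) ≤ 1 / ((n : ℝ) + 1) := by
              apply one_div_le_one_div_of_le (by positivity)
              exact_mod_cast add_le_add_left (Nat.cast_le.mpr hnm) 1
            linarith
          rw [hunion, hmonoSets.directed_le.measure_iUnion]
          refine iSup_le fun n => ?_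
          have hin : alphaS μ s (T + 1 / (n + 1)) ≤ α :=
            hmemS _ (by
              have : (0:ℝ) < 1 / ((n:ℝ) + 1) := by positivity
              linarith)
          exact (ENNReal.le_ofReal_iff_toReal_le (measure_ne_top μ _) hα0.le).mpr hin
        have hT'le : T' ≤ ψ T := by
          by_contra hgt
          push_neg at hgt
          obtain ⟨t, ht1, ht2⟩ := exists_between hgt
          have htnot : ¬ alphaS μ (fun x => ψ (s x)) t ≤ α := fun hm =>
            absurd (hT'S ▸ csInf_le hS'bdd hm) (not_le.mpr ht2)
          apply htnot
          have hsub : {x | t ≤ ψ (s x)} ⊆ {x | T < s x} := by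
            intro y hy
            simp only [Set.mem_setOf_eq] at hy ⊢
            by_contra hle
            push_neg at hle
            have := hψmono (hs_nonneg y) hT0 hle
            linarith
          calc alphaS μ (fun x => ψ (s x)) t
              ≤ (μ {x | T < s x}).toReal :=
                ENNReal.toReal_mono (measure_ne_top μ _) (measure_mono hsub)
            _ ≤ α := ENNReal.toReal_le_of_le_ofReal hα0.le hμgt
        exact le_trans hT'le (hψmono hT0 (hs_nonneg x) h)
  -- conclude
  show lamS (fun x => ψ (s x)) T' = lamS s T
  simp only [lamS]
  rw [key]
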